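/- If a function J : S → [0,+∞] satisfies J ≥ T(J), then J ≥ J*. -/

import Mathlib

/-!
Common framework: countable-state/countable-control total-cost MDPs under the
General Convergence (GC) condition, following H. Yu, "On Convergence of Value
Iteration for a Class of Total Cost Markov Decision Processes".

States `S` and controls `C` are countable types; `U x` is the nonempty set of
feasible controls at `x`; `g x u ∈ (-∞, +∞]` is the one-stage cost (an `EReal`
that is never `⊥` on feasible pairs); `q x u x'` are transition probabilities.

A policy is represented by its conditional control distributions given the
(reversed) history of past (state, control) pairs and the current state.
Expectations are computed by explicit countable sums, splitting every
extended-real quantity into its positive and negative parts (computed in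
`ℝ≥0∞`) and recombining with the convention `∞ - ∞ = ∞`.
-/

open scoped ENNReal Classical
open Filter

noncomputable section

namespace GCMDP

/-- The positive part of an extended real, as an element of `ℝ≥0∞`. -/
def ePos (a : EReal) : ℝ≥0∞ := if a = ⊤ then ⊤ else ENNReal.ofReal a.toReal

/-- Recombine a positive part `P` and a negative part `N` into an extended real,
with the convention `∞ - ∞ = ∞`. -/
def signedSum (P N : ℝ≥0∞) : EReal := if P = ⊤ then ⊤ else (P : EReal) - (N : EReal)

variable {S C : Type}

/-- A (randomized, history-dependent) policy: to each reversed list of past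
(state, control) pairs and each current state it assigns a mass function on
controls. -/
def Policy (S C : Type) : Type := List (S × C) → S → C → ℝ≥0∞

/-- A policy is valid for the control constraint `U` if each of its conditional
distributions is a probability distribution concentrated on the feasible set. -/
def IsPolicy (U : S → Set C) (π : Policy S C) : Prop :=
  ∀ (h : List (S × C)) (x : S), (∑' u : C, π h x u) = 1 ∧ ∀ u : C, π h x u ≠ 0 → u ∈ U x

/-- A policy is nonrandomized if each of its conditional distributions is a
point mass. -/
def Nonrandomized (π : Policy S C) : Prop :=
  ∀ (h : List (S × C)) (x : S), ∃ u : C, ∀ u' : C, π h x u' = if u' = u then 1 else 0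

/-- The initial state recorded in a reversed history `h` with current state `x`. -/
def initOf (h : List (S × C)) (x : S) : S := ((h.getLast?).map Prod.fst).getD x

/-- A policy is semi-Markov if its decision at time `k` depends on the history
only through the time `k`, the initial state and the current state. -/
def IsSemiMarkov (π : Policy S C) : Prop :=
  ∀ (h h' : List (S × C)) (x : S), h.length = h'.length → initOf h x = initOf h' x →
    π h x = π h' x

/-- A policy is Markov if its decision at time `k` depends on the history only
through the time `k` and the current state. -/
def IsMarkov (π : Policy S C) : Prop :=
  ∀ (h h' : List (S × C)) (x : S), h.length = h'.length → π h x = π h' x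

/-- A policy is stationary if its decision depends only on the current state. -/
def IsStationary (π : Policy S C) : Prop :=
  ∀ (h h' : List (S × C)) (x : S), π h x = π h' x

/-- The stationary policy determined by a one-step decision rule `μ`. -/
def toPolicy (μ : S → C → ℝ≥0∞) : Policy S C := fun _ x u => μ x u

/-- Probability that, starting from `x₀` and following policy `π`, the first
transitions produce the reversed history `h` and current state `y`. -/
def histProb (q : S → C → S → ℝ≥0∞) (π : Policy S C) (x₀ : S) :
    List (S × C) → S → ℝ≥0∞
  | [], y => if y = x₀ then 1 else 0
  | (z, u) :: h, y => histProb q π x₀ h z * π h z u * q z u y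

/-- Marginal distribution of the state `x_n` at time `n` under policy `π`
started at `x₀`. -/
def sDist (q : S → C → S → ℝ≥0∞) (π : Policy S C) (x₀ : S) (n : ℕ) (y : S) : ℝ≥0∞ :=
  ∑' h : {l : List (S × C) // l.length = n}, histProb q π x₀ h.1 y

/-- Joint distribution of the state-control pair `(x_n, u_n)` at time `n`. -/
def saDist (q : S → C → S → ℝ≥0∞) (π : Policy S C) (x₀ : S) (n : ℕ) (y : S) (u : C) : ℝ≥0∞ :=
  ∑' h : {l : List (S × C) // l.length = n}, histProb q π x₀ h.1 y * π h.1 y u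

/-- Expectation `E^π_{x₀}[f(x_n, u_n)]` of a nonnegative cost. -/
def costAt (q : S → C → S → ℝ≥0∞) (π : Policy S C) (x₀ : S) (n : ℕ)
    (f : S → C → ℝ≥0∞) : ℝ≥0∞ :=
  ∑' y : S, ∑' u : C, saDist q π x₀ n y u * f y u

/-- Positive part `g₊` of the one-stage cost. -/
def gPos (g : S → C → EReal) (x : S) (u : C) : ℝ≥0∞ := ePos (g x u)

/-- Negative part `g₋` of the one-stage cost. -/
def gNeg (g : S → C → EReal) (x : S) (u : C) : ℝ≥0∞ := ePos (-(g x u))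

/-- `J_π^+(x) = E^π_x[∑_k g₊(x_k,u_k)]`. -/
def Jplus (q : S → C → S → ℝ≥0∞) (g : S → C → EReal) (π : Policy S C) (x : S) : ℝ≥0∞ :=
  ∑' n : ℕ, costAt q π x n (gPos g)

/-- `J_π^-(x) = E^π_x[∑_k g₋(x_k,u_k)]`. -/
def Jminus (q : S → C → S → ℝ≥0∞) (g : S → C → EReal) (π : Policy S C) (x : S) : ℝ≥0∞ :=
  ∑' n : ℕ, costAt q π x n (gNeg g)

/-- The total cost `J_π(x) = J_π^+(x) - J_π^-(x)` of a policy. -/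
def Jpol (q : S → C → S → ℝ≥0∞) (g : S → C → EReal) (π : Policy S C) (x : S) : EReal :=
  signedSum (Jplus q g π x) (Jminus q g π x)

/-- The general convergence (GC) condition: `sup_π J_π^-(x) < ∞` for all `x`. -/
def GC (U : S → Set C) (q : S → C → S → ℝ≥0∞) (g : S → C → EReal) : Prop :=
  ∀ x : S, (⨆ π ∈ {π' : Policy S C | IsPolicy U π'}, Jminus q g π x) ≠ ⊤

/-- The optimal cost function `J*(x) = inf_π J_π(x)`. -/
def Jstar (U : S → Set C) (q : S → C → S → ℝ≥0∞) (g : S → C → EReal) (x : S) : EReal :=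
  ⨅ π ∈ {π' : Policy S C | IsPolicy U π'}, Jpol q g π x

/-- `J^{*+}(x) = inf_π J_π^+(x)`. -/
def JstarPlus (U : S → Set C) (q : S → C → S → ℝ≥0∞) (g : S → C → EReal) (x : S) : ℝ≥0∞ :=
  ⨅ π ∈ {π' : Policy S C | IsPolicy U π'}, Jplus q g π x

/-- `J^{*-}(x) = inf_π J_π^-(x)`. -/
def JstarMinus (U : S → Set C) (q : S → C → S → ℝ≥0∞) (g : S → C → EReal) (x : S) : ℝ≥0∞ :=
  ⨅ π ∈ {π' : Policy S C | IsPolicy U π'}, Jminus q g π x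

/-- The general one-stage dynamic programming operator with one-stage cost `c`:
`(opT c J)(x) = inf_{u ∈ U(x)} { c(x,u) + ∑_{x'} J(x') q(x'|x,u) }`, where the
bracket is evaluated by separating positive and negative parts, with the
convention `∞ - ∞ = ∞`. -/
def opT (U : S → Set C) (q : S → C → S → ℝ≥0∞) (c : S → C → EReal)
    (J : S → EReal) (x : S) : EReal :=
  ⨅ u ∈ U x,
    signedSum (ePos (c x u) + ∑' x' : S, q x u x' * ePos (J x'))
      (ePos (-(c x u)) + ∑' x' : S, q x u x' * ePos (-(J x')))

/-- The dynamic programming operator `T` of the total cost problem. -/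
def Top (U : S → Set C) (q : S → C → S → ℝ≥0∞) (g : S → C → EReal) :
    (S → EReal) → S → EReal :=
  opT U q g

/-- The operator `T₊` associated with the positive part `g₊` of the cost. -/
def TopPlus (U : S → Set C) (q : S → C → S → ℝ≥0∞) (g : S → C → EReal) :
    (S → EReal) → S → EReal :=
  opT U q (fun x u => max (g x u) 0)

/-- The operator `T₋` associated with the (negated) negative part `-g₋` of the cost. -/
def TopMinus (U : S → Set C) (q : S → C → S → ℝ≥0∞) (g : S → C → EReal) :
    (S → EReal) → S → EReal :=
  opT U q (fun x u => min (g x u) 0)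

/-- The cost-free operator `T₀`. -/
def TopZero (U : S → Set C) (q : S → C → S → ℝ≥0∞) :
    (S → EReal) → S → EReal :=
  opT U q (fun _ _ => 0)

/-- The monotone-increasing modification `T̃(J) = max{J, T(J)}` of `T`. -/
def Ttil (U : S → Set C) (q : S → C → S → ℝ≥0∞) (g : S → C → EReal)
    (J : S → EReal) (x : S) : EReal :=
  max (J x) (Top U q g J x)

/-- The operator `T_μ` associated with a stationary decision rule `μ`. -/
def Tmu (q : S → C → S → ℝ≥0∞) (g : S → C → EReal) (μ : S → C → ℝ≥0∞)
    (J : S → EReal) (x : S) : EReal :=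
  signedSum (∑' u : C, μ x u * (ePos (g x u) + ∑' x' : S, q x u x' * ePos (J x')))
    (∑' u : C, μ x u * (ePos (-(g x u)) + ∑' x' : S, q x u x' * ePos (-(J x'))))

/-- Expectation `E^π_{x₀}[J(x_n)]` of an extended-real function of the state at
time `n` (positive and negative parts combined with the convention `∞-∞=∞`). -/
def expState (q : S → C → S → ℝ≥0∞) (π : Policy S C) (x₀ : S) (n : ℕ)
    (J : S → EReal) : EReal :=
  signedSum (∑' y : S, sDist q π x₀ n y * ePos (J y))
    (∑' y : S, sDist q π x₀ n y * ePos (-(J y)))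

/-- The expected tail cost `E^π_{x₀}[∑_{k ≥ n} g(x_k, u_k)]`. -/
def tailCost (q : S → C → S → ℝ≥0∞) (g : S → C → EReal) (π : Policy S C)
    (x₀ : S) (n : ℕ) : EReal :=
  signedSum (∑' k : ℕ, costAt q π x₀ (n + k) (gPos g))
    (∑' k : ℕ, costAt q π x₀ (n + k) (gNeg g))

/-- Membership in the class `A₀(S)`: functions nowhere `-∞` such that
`inf_{n ≥ 1} T₀ⁿ(min{J, 0})` is nowhere `-∞`. -/
def MemA0 (U : S → Set C) (q : S → C → S → ℝ≥0∞) (J : S → EReal) : Prop :=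
  (∀ x : S, J x ≠ ⊥) ∧
    ∀ x : S, (⨅ n : ℕ, (TopZero U q)^[n + 1] (fun y => min (J y) 0) x) ≠ ⊥



/-! ### Auxiliary lemmas for Statement 10 -/

section Aux10

variable {S C : Type}

lemma ePos_top' : ePos (⊤ : EReal) = ⊤ := by simp [ePos]

lemma ePos_ne_top' {a : EReal} (h : a ≠ ⊤) : ePos a ≠ ⊤ := by
  simp [ePos, h]

lemma ePos_of_nonpos {a : EReal} (h : a ≤ 0) : ePos a = 0 := by
  have ht : a ≠ ⊤ := by
    intro h'
    rw [h'] at h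
    exact absurd h (by simp)
  rw [ePos, if_neg ht, ENNReal.ofReal_eq_zero]
  rcases eq_or_ne a ⊥ with hb | hb
  · simp [hb]
  · simpa using EReal.toReal_le_toReal h hb (by simp)

lemma toReal_nonneg' {a : EReal} (h : 0 ≤ a) : 0 ≤ a.toReal := by
  rcases eq_or_ne a ⊤ with ht | ht
  · simp [ht]
  · simpa using EReal.toReal_le_toReal h (by simp) ht

lemma coe_ePos {a : EReal} (h0 : 0 ≤ a) (ht : a ≠ ⊤) : ((ePos a : ℝ≥0∞) : EReal) = a := by
  rw [ePos, if_neg ht, EReal.coe_ennreal_ofReal, max_eq_left (toReal_nonneg' h0)]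
  exact EReal.coe_toReal ht (fun hb => by simp [hb] at h0)

lemma coe_ennreal_eq {P : ℝ≥0∞} (h : P ≠ ⊤) : (P : EReal) = ((P.toReal : ℝ) : EReal) := by
  conv_lhs => rw [← ENNReal.ofReal_toReal h]
  rw [EReal.coe_ennreal_ofReal, max_eq_left ENNReal.toReal_nonneg]

/-- The deterministic (nonrandomized) Markov policy determined by `f`. -/
def detPolicy (f : ℕ → S → C) : Policy S C := fun h x u => if u = f h.length x then 1 else 0

lemma detPolicy_isPolicy {U : S → Set C} {f : ℕ → S → C} (hf : ∀ n x, f n x ∈ U x) :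
    IsPolicy U (detPolicy f) := by
  intro h x
  refine ⟨tsum_ite_eq (f h.length x) 1, fun u hu => ?_⟩
  by_cases h' : u = f h.length x
  · rw [h']; exact hf _ _
  · simp [detPolicy, h'] at hu

lemma histProb_cons (q : S → C → S → ℝ≥0∞) (π : Policy S C) (x₀ z : S) (u : C) (y : S)
    (h : List (S × C)) :
    histProb q π x₀ ((z, u) :: h) y = histProb q π x₀ h z * π h z u * q z u y := rfl

/-- Prepending a state-control pair to a history of length `n`. -/
def consEquiv (S C : Type) (n : ℕ) :
    (S × C) × {l : List (S × C) // l.length = n} ≃ {l : List (S × C) // l.length = n + 1} where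
  toFun p := ⟨p.1 :: p.2.1, by simp [p.2.2]⟩
  invFun l := (l.1.head (by
      intro hnil
      have := l.2
      rw [hnil] at this
      simp at this),
    ⟨l.1.tail, by
      have := l.2
      simp [List.length_tail, this]⟩)
  left_inv p := rfl
  right_inv l := by
    rcases l with ⟨l, hl⟩
    cases l with
    | nil => simp at hl
    | cons a t => rfl

lemma sDist_zero (q : S → C → S → ℝ≥0∞) (π : Policy S C) (x₀ y : S) :
    sDist q π x₀ 0 y = if y = x₀ then 1 else 0 := by
  rw [sDist, tsum_eq_single (⟨[], rfl⟩ : {l : List (S × C) // l.length = 0})]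
  · rfl
  · intro b hb
    exact absurd (Subtype.ext (List.length_eq_zero_iff.mp b.2)) hb

lemma sDist_succ (q : S → C → S → ℝ≥0∞) (f : ℕ → S → C) (x₀ : S) (n : ℕ) (y : S) :
    sDist q (detPolicy f) x₀ (n + 1) y
      = ∑' z : S, sDist q (detPolicy f) x₀ n z * q z (f n z) y := by
  have h1 : sDist q (detPolicy f) x₀ (n + 1) y
      = ∑' p : (S × C) × {l : List (S × C) // l.length = n},
          histProb q (detPolicy f) x₀ p.2.1 p.1.1
            * ((if p.1.2 = f n p.1.1 then 1 else 0) * q p.1.1 p.1.2 y) := by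
    rw [sDist, ← Equiv.tsum_eq (consEquiv S C n)]
    refine tsum_congr ?_
    rintro ⟨⟨z, u⟩, ⟨h, hl⟩⟩
    show histProb q (detPolicy f) x₀ ((z, u) :: h) y = _
    rw [histProb_cons]
    simp [detPolicy, hl, mul_assoc]
  rw [h1, ENNReal.tsum_prod (f := fun (zu : S × C) (b : {l : List (S × C) // l.length = n}) =>
    histProb q (detPolicy f) x₀ b.1 zu.1 * ((if zu.2 = f n zu.1 then 1 else 0) * q zu.1 zu.2 y))]
  have h3 : ∀ zu : S × C,
      (∑' b : {l : List (S × C) // l.length = n},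
          histProb q (detPolicy f) x₀ b.1 zu.1
            * ((if zu.2 = f n zu.1 then 1 else 0) * q zu.1 zu.2 y))
        = sDist q (detPolicy f) x₀ n zu.1
            * ((if zu.2 = f n zu.1 then 1 else 0) * q zu.1 zu.2 y) := by
    intro zu
    rw [ENNReal.tsum_mul_right, sDist]
  rw [tsum_congr h3, ENNReal.tsum_prod (f := fun (z : S) (u : C) =>
    sDist q (detPolicy f) x₀ n z * ((if u = f n z then 1 else 0) * q z u y))]
  refine tsum_congr fun z => ?_
  rw [tsum_eq_single (f n z)]
  · simp
  · intro u hu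
    simp [hu]

lemma saDist_det (q : S → C → S → ℝ≥0∞) (f : ℕ → S → C) (x₀ : S) (n : ℕ) (y : S) (u : C) :
    saDist q (detPolicy f) x₀ n y u
      = sDist q (detPolicy f) x₀ n y * (if u = f n y then 1 else 0) := by
  rw [saDist, sDist, ← ENNReal.tsum_mul_right]
  refine tsum_congr fun h => ?_
  have : detPolicy (S := S) (C := C) f h.1 y u = if u = f n y then 1 else 0 := by
    simp [detPolicy, h.2]
  rw [this]

lemma costAt_det (q : S → C → S → ℝ≥0∞) (f : ℕ → S → C) (x₀ : S) (n : ℕ)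
    (φ : S → C → ℝ≥0∞) :
    costAt q (detPolicy f) x₀ n φ
      = ∑' y : S, sDist q (detPolicy f) x₀ n y * φ y (f n y) := by
  rw [costAt]
  refine tsum_congr fun y => ?_
  rw [tsum_eq_single (f n y)]
  · rw [saDist_det]; simp
  · intro u hu
    rw [saDist_det]
    simp [hu]

lemma sDist_mass (q : S → C → S → ℝ≥0∞) {U : S → Set C}
    (hq : ∀ x, ∀ u ∈ U x, (∑' x' : S, q x u x') = 1)
    (f : ℕ → S → C) (hf : ∀ n x, f n x ∈ U x) (x₀ : S) :
    ∀ n : ℕ, (∑' y : S, sDist q (detPolicy f) x₀ n y) ≤ 1 := by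
  intro n
  induction n with
  | zero =>
    have : (∑' y : S, sDist q (detPolicy f) x₀ 0 y) = 1 := by
      rw [tsum_congr (fun y => sDist_zero q (detPolicy f) x₀ y)]
      exact tsum_ite_eq x₀ 1
    rw [this]
  | succ n ih =>
    calc (∑' y : S, sDist q (detPolicy f) x₀ (n + 1) y)
        = ∑' y : S, ∑' z : S, sDist q (detPolicy f) x₀ n z * q z (f n z) y :=
          tsum_congr fun y => sDist_succ q f x₀ n y
      _ = ∑' z : S, ∑' y : S, sDist q (detPolicy f) x₀ n z * q z (f n z) y := ENNReal.tsum_comm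
      _ = ∑' z : S, sDist q (detPolicy f) x₀ n z * ∑' y : S, q z (f n z) y :=
          tsum_congr fun z => ENNReal.tsum_mul_left
      _ = ∑' z : S, sDist q (detPolicy f) x₀ n z := by
          refine tsum_congr fun z => ?_
          rw [hq z _ (hf n z), mul_one]
      _ ≤ 1 := ih

lemma exists_good_control (U : S → Set C) (q : S → C → S → ℝ≥0∞) (g : S → C → EReal)
    (J : S → EReal) (hU : ∀ x, (U x).Nonempty) (hg : ∀ x, ∀ u ∈ U x, g x u ≠ ⊥)
    (hJ0 : ∀ x : S, 0 ≤ J x) (hTJ : ∀ x : S, Top U q g J x ≤ J x)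
    (δ : ℝ) (hδ : 0 < δ) (x : S) :
    ∃ u ∈ U x, gPos g x u + (∑' x' : S, q x u x' * ePos (J x'))
      ≤ ePos (J x) + gNeg g x u + ENNReal.ofReal δ := by
  by_cases hx : J x = ⊤
  · obtain ⟨u, hu⟩ := hU x
    refine ⟨u, hu, ?_⟩
    rw [hx, ePos_top']
    simp
  · have hxb : J x ≠ ⊥ := fun hb => by simpa [hb] using hJ0 x
    set r := (J x).toReal with hr
    have hJx : J x = (r : EReal) := (EReal.coe_toReal hx hxb).symm
    have hr0 : 0 ≤ r := toReal_nonneg' (hJ0 x)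
    have hlt : Top U q g J x < (((r + δ : ℝ)) : EReal) := by
      calc Top U q g J x ≤ J x := hTJ x
        _ < ((r + δ : ℝ) : EReal) := by
            rw [hJx]
            exact_mod_cast (by linarith : r < r + δ)
    rw [Top, opT] at hlt
    rw [iInf_lt_iff] at hlt
    obtain ⟨u, hlt⟩ := hlt
    rw [iInf_lt_iff] at hlt
    obtain ⟨hu, hlt⟩ := hlt
    refine ⟨u, hu, ?_⟩
    have hneg : (∑' x' : S, q x u x' * ePos (-(J x'))) = 0 := by
      have : ∀ x' : S, q x u x' * ePos (-(J x')) = 0 := by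
        intro x'
        have hle : -(J x') ≤ 0 := by
          simpa using EReal.neg_le_neg_iff.mpr (hJ0 x')
        rw [ePos_of_nonpos hle, mul_zero]
      rw [tsum_congr this, tsum_zero]
    rw [hneg, add_zero, signedSum] at hlt
    set P := ePos (g x u) + ∑' x' : S, q x u x' * ePos (J x') with hP
    set N := ePos (-(g x u)) with hN
    by_cases hPt : P = ⊤
    · rw [if_pos hPt] at hlt
      exact absurd hlt (by simp)
    · rw [if_neg hPt] at hlt
      have hNt : N ≠ ⊤ := ePos_ne_top' (by
        intro h'
        exact hg x u hu (by
          have : g x u = -(⊤ : EReal) := by rw [← h']; simp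
          simpa using this))
      set p := P.toReal with hp
      set nn := N.toReal with hnn
      have hlt' : p - nn < r + δ := by
        have : ((p - nn : ℝ) : EReal) < ((r + δ : ℝ) : EReal) := by
          rw [EReal.coe_sub]
          rw [coe_ennreal_eq hPt, coe_ennreal_eq hNt] at hlt
          exact_mod_cast hlt
        exact_mod_cast this
      have hP' : gPos g x u + (∑' x' : S, q x u x' * ePos (J x')) = P := rfl
      have hNg : gNeg g x u = N := rfl
      rw [hP', hNg]
      have hePos : ePos (J x) = ENNReal.ofReal r := by
        rw [ePos, if_neg hx]
      calc P = ENNReal.ofReal p := (ENNReal.ofReal_toReal hPt).symm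
        _ ≤ ENNReal.ofReal (r + nn + δ) :=
            ENNReal.ofReal_le_ofReal (by linarith)
        _ = ENNReal.ofReal r + ENNReal.ofReal nn + ENNReal.ofReal δ := by
            rw [ENNReal.ofReal_add (by linarith [ENNReal.toReal_nonneg (a := N)]) hδ.le,
              ENNReal.ofReal_add hr0 ENNReal.toReal_nonneg]
        _ = ePos (J x) + N + ENNReal.ofReal δ := by
            rw [hePos, ENNReal.ofReal_toReal hNt]

lemma main_induction (U : S → Set C) (q : S → C → S → ℝ≥0∞) (g : S → C → EReal)
    (J : S → EReal)
    (hq : ∀ x, ∀ u ∈ U x, (∑' x' : S, q x u x') = 1)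
    (f : ℕ → S → C) (hfU : ∀ n x, f n x ∈ U x) (εs : ℕ → ℝ≥0∞)
    (hfI : ∀ n x, gPos g x (f n x) + (∑' x' : S, q x (f n x) x' * ePos (J x'))
      ≤ ePos (J x) + gNeg g x (f n x) + εs n)
    (x₀ : S) :
    ∀ n : ℕ,
      (∑ k ∈ Finset.range n, costAt q (detPolicy f) x₀ k (gPos g))
          + (∑' y : S, sDist q (detPolicy f) x₀ n y * ePos (J y))
        ≤ ePos (J x₀) + (∑ k ∈ Finset.range n, costAt q (detPolicy f) x₀ k (gNeg g))
          + ∑ k ∈ Finset.range n, εs k := by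
  intro n
  induction n with
  | zero =>
    have h0 : (∑' y : S, sDist q (detPolicy f) x₀ 0 y * ePos (J y)) = ePos (J x₀) := by
      rw [tsum_eq_single x₀]
      · rw [sDist_zero, if_pos rfl, one_mul]
      · intro y hy
        rw [sDist_zero, if_neg hy, zero_mul]
    simp [h0]
  | succ n ih =>
    have key : costAt q (detPolicy f) x₀ n (gPos g)
          + (∑' y : S, sDist q (detPolicy f) x₀ (n + 1) y * ePos (J y))
        ≤ (∑' y : S, sDist q (detPolicy f) x₀ n y * ePos (J y))
          + costAt q (detPolicy f) x₀ n (gNeg g) + εs n := by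
      have hsplit : (∑' y : S, sDist q (detPolicy f) x₀ (n + 1) y * ePos (J y))
          = ∑' z : S, sDist q (detPolicy f) x₀ n z
              * ∑' y : S, q z (f n z) y * ePos (J y) := by
        calc (∑' y : S, sDist q (detPolicy f) x₀ (n + 1) y * ePos (J y))
            = ∑' y : S, (∑' z : S, sDist q (detPolicy f) x₀ n z * q z (f n z) y)
                * ePos (J y) := tsum_congr fun y => by rw [sDist_succ]
          _ = ∑' y : S, ∑' z : S,
                sDist q (detPolicy f) x₀ n z * (q z (f n z) y * ePos (J y)) := by
              refine tsum_congr fun y => ?_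
              rw [← ENNReal.tsum_mul_right]
              exact tsum_congr fun z => mul_assoc _ _ _
          _ = ∑' z : S, ∑' y : S,
                sDist q (detPolicy f) x₀ n z * (q z (f n z) y * ePos (J y)) :=
              ENNReal.tsum_comm
          _ = ∑' z : S, sDist q (detPolicy f) x₀ n z
                * ∑' y : S, q z (f n z) y * ePos (J y) :=
              tsum_congr fun z => ENNReal.tsum_mul_left
      calc costAt q (detPolicy f) x₀ n (gPos g)
            + (∑' y : S, sDist q (detPolicy f) x₀ (n + 1) y * ePos (J y))
          = (∑' z : S, sDist q (detPolicy f) x₀ n z * gPos g z (f n z))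
              + ∑' z : S, sDist q (detPolicy f) x₀ n z
                  * ∑' y : S, q z (f n z) y * ePos (J y) := by
            rw [costAt_det, hsplit]
        _ = ∑' z : S, sDist q (detPolicy f) x₀ n z
              * (gPos g z (f n z) + ∑' y : S, q z (f n z) y * ePos (J y)) := by
            rw [← ENNReal.tsum_add]
            exact tsum_congr fun z => (mul_add _ _ _).symm
        _ ≤ ∑' z : S, sDist q (detPolicy f) x₀ n z
              * (ePos (J z) + gNeg g z (f n z) + εs n) :=
            ENNReal.tsum_le_tsum fun z => mul_le_mul_right (hfI n z) _
        _ = (∑' z : S, sDist q (detPolicy f) x₀ n z * ePos (J z))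
              + (∑' z : S, sDist q (detPolicy f) x₀ n z * gNeg g z (f n z))
              + ∑' z : S, sDist q (detPolicy f) x₀ n z * εs n := by
            rw [← ENNReal.tsum_add, ← ENNReal.tsum_add]
            exact tsum_congr fun z => by ring
        _ ≤ (∑' z : S, sDist q (detPolicy f) x₀ n z * ePos (J z))
              + costAt q (detPolicy f) x₀ n (gNeg g) + εs n := by
            refine add_le_add (add_le_add_right (le_of_eq (costAt_det q f x₀ n (gNeg g)).symm) _) ?_
            rw [ENNReal.tsum_mul_right]
            exact mul_le_of_le_one_left' (sDist_mass q hq f hfU x₀ n)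
    rw [Finset.sum_range_succ, Finset.sum_range_succ, Finset.sum_range_succ]
    calc (∑ k ∈ Finset.range n, costAt q (detPolicy f) x₀ k (gPos g))
            + costAt q (detPolicy f) x₀ n (gPos g)
            + (∑' y : S, sDist q (detPolicy f) x₀ (n + 1) y * ePos (J y))
        = (∑ k ∈ Finset.range n, costAt q (detPolicy f) x₀ k (gPos g))
            + (costAt q (detPolicy f) x₀ n (gPos g)
              + (∑' y : S, sDist q (detPolicy f) x₀ (n + 1) y * ePos (J y))) := by ring
      _ ≤ (∑ k ∈ Finset.range n, costAt q (detPolicy f) x₀ k (gPos g))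
            + ((∑' y : S, sDist q (detPolicy f) x₀ n y * ePos (J y))
              + costAt q (detPolicy f) x₀ n (gNeg g) + εs n) := add_le_add_right key _
      _ = ((∑ k ∈ Finset.range n, costAt q (detPolicy f) x₀ k (gPos g))
            + (∑' y : S, sDist q (detPolicy f) x₀ n y * ePos (J y)))
            + (costAt q (detPolicy f) x₀ n (gNeg g) + εs n) := by ring
      _ ≤ (ePos (J x₀) + (∑ k ∈ Finset.range n, costAt q (detPolicy f) x₀ k (gNeg g))
            + ∑ k ∈ Finset.range n, εs k)
            + (costAt q (detPolicy f) x₀ n (gNeg g) + εs n) := add_le_add_left ih _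
      _ = ePos (J x₀)
            + ((∑ k ∈ Finset.range n, costAt q (detPolicy f) x₀ k (gNeg g))
              + costAt q (detPolicy f) x₀ n (gNeg g))
            + ((∑ k ∈ Finset.range n, εs k) + εs n) := by ring

end Aux10

/-- any nonnegative function `J` with `J ≥ T(J)` dominates `J*`. -/
theorem nonneg_superharmonic_ge_optimal {S C : Type} [Countable S] [Countable C]
    (U : S → Set C) (q : S → C → S → ℝ≥0∞) (g : S → C → EReal)
    (hU : ∀ x, (U x).Nonempty)
    (hg : ∀ x, ∀ u ∈ U x, g x u ≠ ⊥)
    (hq : ∀ x, ∀ u ∈ U x, (∑' x' : S, q x u x') = 1)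
    (hGC : GC U q g)
    (J : S → EReal) (hJ0 : ∀ x : S, 0 ≤ J x) (hTJ : ∀ x : S, Top U q g J x ≤ J x) :
    ∀ x : S, Jstar U q g x ≤ J x := by
  intro x₀
  by_cases hx : J x₀ = ⊤
  · rw [hx]; exact le_top
  · -- J x₀ is finite
    have hxb : J x₀ ≠ ⊥ := fun hb => by simpa [hb] using hJ0 x₀
    set r := (J x₀).toReal with hr
    have hJx : J x₀ = (r : EReal) := (EReal.coe_toReal hx hxb).symm
    have hr0 : 0 ≤ r := toReal_nonneg' (hJ0 x₀)
    -- the main estimate: for every ε > 0, Jstar x₀ ≤ J x₀ + ε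
    have hmain : ∀ ε : ℝ, 0 < ε → Jstar U q g x₀ ≤ ((r + ε : ℝ) : EReal) := by
      intro ε hε
      have hsel : ∀ (n : ℕ) (x : S), ∃ u ∈ U x,
          gPos g x u + (∑' x' : S, q x u x' * ePos (J x'))
            ≤ ePos (J x) + gNeg g x u + ENNReal.ofReal (ε * (1 / 2) ^ (n + 1)) := by
        intro n x
        exact exists_good_control U q g J hU hg hJ0 hTJ _ (by positivity) x
      choose f hfU hfI using hsel
      set π : Policy S C := detPolicy f with hπdef
      have hπ : IsPolicy U π := detPolicy_isPolicy hfU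
      -- total error bound
      have hεsum : ∀ n : ℕ,
          (∑ k ∈ Finset.range n, ENNReal.ofReal (ε * (1 / 2) ^ (k + 1)))
            ≤ ENNReal.ofReal ε := by
        intro n
        have hnn : ∀ k ∈ Finset.range n, 0 ≤ ε * (1 / 2 : ℝ) ^ (k + 1) := by
          intro k _; positivity
        rw [← ENNReal.ofReal_sum_of_nonneg hnn]
        refine ENNReal.ofReal_le_ofReal ?_
        have h2 := sum_geometric_two_le n
        have heq : (∑ k ∈ Finset.range n, ε * (1 / 2 : ℝ) ^ (k + 1))
            = ε / 2 * ∑ k ∈ Finset.range n, (1 / 2 : ℝ) ^ k := by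
          rw [Finset.mul_sum]
          refine Finset.sum_congr rfl fun k _ => ?_
          ring
        rw [heq]
        nlinarith
      -- Jplus bound
      have hJplus : Jplus q g π x₀
          ≤ ePos (J x₀) + Jminus q g π x₀ + ENNReal.ofReal ε := by
        rw [Jplus, ENNReal.tsum_eq_iSup_nat]
        refine iSup_le fun n => ?_
        have h1 := main_induction U q g J hq f hfU
          (fun k => ENNReal.ofReal (ε * (1 / 2) ^ (k + 1))) hfI x₀ n
        calc (∑ k ∈ Finset.range n, costAt q π x₀ k (gPos g))
            ≤ (∑ k ∈ Finset.range n, costAt q π x₀ k (gPos g))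
              + (∑' y : S, sDist q π x₀ n y * ePos (J y)) := le_self_add
          _ ≤ ePos (J x₀) + (∑ k ∈ Finset.range n, costAt q π x₀ k (gNeg g))
              + ∑ k ∈ Finset.range n, ENNReal.ofReal (ε * (1 / 2) ^ (k + 1)) := h1
          _ ≤ ePos (J x₀) + Jminus q g π x₀ + ENNReal.ofReal ε := by
              refine add_le_add (add_le_add_right ?_ _) (hεsum n)
              rw [Jminus]
              exact ENNReal.sum_le_tsum _
      -- finiteness facts
      have hJminus_ne : Jminus q g π x₀ ≠ ⊤ := by
        intro hT
        refine hGC x₀ ?_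
        refine top_unique ?_
        rw [← hT]
        exact le_iSup₂ (f := fun (π' : Policy S C) (_ : π' ∈ {π' : Policy S C | IsPolicy U π'})
          => Jminus q g π' x₀) π hπ
      have hePos_ne : ePos (J x₀) ≠ ⊤ := ePos_ne_top' hx
      have hJplus_ne : Jplus q g π x₀ ≠ ⊤ := by
        intro hT
        rw [hT] at hJplus
        exact absurd (top_unique hJplus)
          (by simp [ENNReal.add_eq_top, hJminus_ne, hePos_ne, ENNReal.ofReal_ne_top])
      -- pass to reals
      set p := (Jplus q g π x₀).toReal with hp
      set m := (Jminus q g π x₀).toReal with hm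
      have hpm : p ≤ r + m + ε := by
        have := ENNReal.toReal_mono (by
            simp [ENNReal.add_eq_top, hJminus_ne, hePos_ne, ENNReal.ofReal_ne_top]) hJplus
        rw [ENNReal.toReal_add (by simp [ENNReal.add_eq_top, hJminus_ne, hePos_ne])
            ENNReal.ofReal_ne_top,
          ENNReal.toReal_add hePos_ne hJminus_ne] at this
        have hr' : (ePos (J x₀)).toReal = r := by
          rw [ePos, if_neg hx, ENNReal.toReal_ofReal hr0]
        rw [hr', ENNReal.toReal_ofReal hε.le] at this
        exact this
      -- conclude Jstar ≤ Jpol ≤ r + ε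
      have hJpol : Jpol q g π x₀ ≤ ((r + ε : ℝ) : EReal) := by
        rw [Jpol, signedSum, if_neg hJplus_ne, coe_ennreal_eq hJplus_ne,
          coe_ennreal_eq hJminus_ne, ← hp, ← hm, ← EReal.coe_sub]
        exact_mod_cast (by linarith : p - m ≤ r + ε)
      calc Jstar U q g x₀ ≤ Jpol q g π x₀ :=
            iInf₂_le (f := fun (π' : Policy S C)
              (_ : π' ∈ {π' : Policy S C | IsPolicy U π'}) => Jpol q g π' x₀) π hπ
        _ ≤ _ := hJpol
    -- from ∀ ε > 0 to the limit
    by_contra hcon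
    rw [not_le, hJx] at hcon
    have hne_top : Jstar U q g x₀ ≠ ⊤ := by
      intro hT
      have := hmain 1 one_pos
      rw [hT] at this
      exact absurd (top_le_iff.mp this) (EReal.coe_ne_top _)
    have hne_bot : Jstar U q g x₀ ≠ ⊥ := by
      intro hB
      rw [hB] at hcon
      exact absurd hcon (by simp)
    set t := (Jstar U q g x₀).toReal with ht
    have hJst : Jstar U q g x₀ = (t : EReal) := (EReal.coe_toReal hne_top hne_bot).symm
    rw [hJst] at hcon
    have hrt : r < t := by exact_mod_cast hcon
    have := hmain ((t - r) / 2) (by linarith)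
    rw [hJst] at this
    have : t ≤ r + (t - r) / 2 := by exact_mod_cast this
    linarith


end GCMDP

end
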